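/- Stable point condition with noise: Let b = A x* + e where x* is k-sparse with support Λ, and suppose A_Γ^T A_Γ is invertible for every index set Γ of size k. Fix α̲ > 0 and an index set Γ of size k with Γ ≠ Λ. If there exists x̄ with supp(x̄) ⊆ Γ satisfying (A^T(b − A x̄))_Γ = 0 and min_{i∈Γ} |x̄_i| ≥ α̲ · max_{j∈Γ^C} |(A^T(b − A x̄))_j|, then ‖A_Γ^† A_{Λ∖Γ} x*_{Λ∖Γ}‖ + ‖A_Γ^† e‖ ≥ α̲ ( ‖A_{Λ∖Γ}^T (I − A_Γ A_Γ^†) A_{Λ∖Γ} x*_{Λ∖Γ}‖ − ‖A_{Λ∖Γ}^T (I − A_Γ A_Γ^†) e‖ ). -/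

import Mathlib

open scoped Classical
open Finset Matrix

/-- Euclidean norm of a finitely indexed real vector. -/
noncomputable def euclNorm {m : Type*} [Fintype m] (x : m → ℝ) : ℝ :=
  Real.sqrt (∑ i, (x i) ^ 2)

/-- The column submatrix of `A` indexed by the finset `Γ`. -/
def colSub {n N : ℕ} (A : Matrix (Fin n) (Fin N) ℝ) (Γ : Finset (Fin N)) :
    Matrix (Fin n) Γ ℝ := fun i j => A i j.1

/-- The Moore–Penrose pseudoinverse `A_Γ^† = (A_Γᵀ A_Γ)⁻¹ A_Γᵀ`. -/
noncomputable def pinv {n N : ℕ} (A : Matrix (Fin n) (Fin N) ℝ) (Γ : Finset (Fin N)) :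
    Matrix Γ (Fin n) ℝ := ((colSub A Γ)ᵀ * colSub A Γ)⁻¹ * (colSub A Γ)ᵀ


lemma euclNorm_eq_norm {m : Type*} [Fintype m] (x : m → ℝ) :
    euclNorm x = ‖(WithLp.equiv 2 (m → ℝ)).symm x‖ := by
  rw [EuclideanSpace.norm_eq]
  simp [euclNorm, Real.norm_eq_abs, sq_abs]

lemma euclNorm_add_le {m : Type*} [Fintype m] (x y : m → ℝ) :
    euclNorm (x + y) ≤ euclNorm x + euclNorm y := by
  simp only [euclNorm_eq_norm, WithLp.equiv_symm_apply, WithLp.toLp_add]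
  exact norm_add_le _ _

lemma euclNorm_sub_le_add {m : Type*} [Fintype m] (x y : m → ℝ) :
    euclNorm x - euclNorm y ≤ euclNorm (x + y) := by
  have h := euclNorm_add_le (x + y) (-y)
  simp only [add_neg_cancel_right] at h
  have h2 : euclNorm (-y) = euclNorm y := by simp [euclNorm]
  linarith


/-- stable point condition in the presence of noise. -/
theorem stable_point_condition_noise {n N k : ℕ}
    (A : Matrix (Fin n) (Fin N) ℝ) (e : Fin n → ℝ) (xstar : Fin N → ℝ)
    (Λ : Finset (Fin N)) (hΛ : ∀ i, xstar i ≠ 0 ↔ i ∈ Λ) (hΛcard : Λ.card = k)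
    (hinv : ∀ Γ : Finset (Fin N), Γ.card = k → IsUnit ((colSub A Γ)ᵀ * colSub A Γ))
    (αl : ℝ) (hαl : 0 < αl)
    (Γ : Finset (Fin N)) (hΓcard : Γ.card = k) (hne : Γ ≠ Λ)
    (b : Fin n → ℝ) (hb : b = A.mulVec xstar + e)
    (xb : Fin N → ℝ) (hsupp : ∀ i ∉ Γ, xb i = 0)
    (hgrad : ∀ i ∈ Γ, (Aᵀ.mulVec (b - A.mulVec xb)) i = 0)
    (hmin : ∀ i ∈ Γ, ∀ j ∉ Γ, αl * |(Aᵀ.mulVec (b - A.mulVec xb)) j| ≤ |xb i|) :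
    euclNorm ((pinv A Γ * colSub A (Λ \ Γ)).mulVec fun j : ↥(Λ \ Γ) => xstar j.1)
        + euclNorm ((pinv A Γ).mulVec e)
      ≥ αl * (euclNorm (((colSub A (Λ \ Γ))ᵀ * (1 - colSub A Γ * pinv A Γ)
              * colSub A (Λ \ Γ)).mulVec fun j : ↥(Λ \ Γ) => xstar j.1)
          - euclNorm (((colSub A (Λ \ Γ))ᵀ
              * (1 - colSub A Γ * pinv A Γ)).mulVec e)) := by
  set Γ' := colSub A Γ with hΓ'
  set D := colSub A (Λ \ Γ) with hD
  set M := pinv A Γ with hM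
  set x' : ↥(Λ \ Γ) → ℝ := fun j => xstar j.1 with hx'
  set xsΓ : ↥Γ → ℝ := fun i => xstar i.1 with hxsΓ
  set xbΓ : ↥Γ → ℝ := fun i => xb i.1 with hxbΓ
  set r : Fin n → ℝ := b - A.mulVec xb with hr
  set r' : ↥(Λ \ Γ) → ℝ := fun j => (Aᵀ.mulVec r) j.1 with hr'
  set u := (M * D).mulVec x' with hu
  set v := M.mulVec e with hv
  set w := ((D)ᵀ * (1 - Γ' * M) * D).mulVec x' with hw
  set z := ((D)ᵀ * (1 - Γ' * M)).mulVec e with hz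
  -- basic identities
  have hGram : ((Γ')ᵀ * Γ')⁻¹ * ((Γ')ᵀ * Γ') = 1 :=
    Matrix.nonsing_inv_mul _ ((Matrix.isUnit_iff_isUnit_det _).mp (hinv Γ hΓcard))
  have h1 : (Γ')ᵀ.mulVec r = 0 := by
    funext i
    have := hgrad i.1 i.2
    simpa [Matrix.mulVec, dotProduct, Matrix.transpose, colSub, hΓ'] using this
  have h2 : A.mulVec xb = Γ'.mulVec xbΓ := by
    funext i
    simp only [Matrix.mulVec, dotProduct, colSub, hΓ', hxbΓ]
    rw [Finset.sum_coe_sort Γ (fun j => A i j * xb j)]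
    exact (Finset.sum_subset (Finset.subset_univ Γ) (by
      intro j _ hj
      simp [hsupp j hj])).symm
  have h3 : A.mulVec xstar = Γ'.mulVec xsΓ + D.mulVec x' := by
    funext i
    simp only [Pi.add_apply, Matrix.mulVec, dotProduct, colSub, hΓ', hD, hxsΓ, hx']
    rw [Finset.sum_coe_sort Γ (fun j => A i j * xstar j),
      Finset.sum_coe_sort (Λ \ Γ) (fun j => A i j * xstar j),
      ← Finset.sum_union (Finset.disjoint_sdiff)]
    exact (Finset.sum_subset (Finset.subset_univ _) (by
      intro j _ hj
      simp only [Finset.mem_union, Finset.mem_sdiff, not_or, not_and, not_not] at hj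
      have : xstar j = 0 := by
        by_contra hc
        exact hj.1 ((hj.2 ((hΛ j).mp hc)))
      simp [this])).symm
  -- M b = xbΓ
  have hMone : M * Γ' = 1 := by
    rw [hM, pinv, ← hΓ', Matrix.mul_assoc]; exact hGram
  have hMΓ' : ∀ y : ↥Γ → ℝ, M.mulVec (Γ'.mulVec y) = y := by
    intro y
    rw [Matrix.mulVec_mulVec, hMone, Matrix.one_mulVec]
  have hMA : M.mulVec (A.mulVec xb) = xbΓ := by
    rw [h2, hMΓ']
  have hMr : M.mulVec r = 0 := by
    rw [hM, pinv, ← hΓ', ← Matrix.mulVec_mulVec, h1, Matrix.mulVec_zero]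
  have hMb : M.mulVec b = xbΓ := by
    have : M.mulVec b - M.mulVec (A.mulVec xb) = 0 := by
      rw [← Matrix.mulVec_sub]; exact hMr
    rw [sub_eq_zero] at this
    rw [this, hMA]
  -- Step A : u + v = xbΓ - xsΓ
  have hA : u + v = xbΓ - xsΓ := by
    have : M.mulVec b = xsΓ + (u + v) := by
      rw [hb, Matrix.mulVec_add, h3, Matrix.mulVec_add, hMΓ', hu, hv,
        ← Matrix.mulVec_mulVec, add_assoc]
    rw [hMb] at this
    rw [this]; abel
  -- Step B : w + z = r'
  have hB : w + z = r' := by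
    have hs : D.mulVec x' + e = b - Γ'.mulVec xsΓ := by
      rw [hb, h3]; abel
    have hMuv : M.mulVec (D.mulVec x' + e) = xbΓ - xsΓ := by
      have h4 : M.mulVec (D.mulVec x') = u := by
        rw [hu, Matrix.mulVec_mulVec]
      rw [Matrix.mulVec_add, h4, ← hv]
      exact hA
    have expand : w + z = ((D)ᵀ * (1 - Γ' * M)).mulVec (D.mulVec x' + e) := by
      rw [hw, hz, Matrix.mulVec_add, ← Matrix.mulVec_mulVec]
    rw [expand]
    have : ((D)ᵀ * (1 - Γ' * M)) = (D)ᵀ - (D)ᵀ * Γ' * M := by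
      rw [Matrix.mul_sub, Matrix.mul_one, Matrix.mul_assoc]
    rw [this, Matrix.sub_mulVec, ← Matrix.mulVec_mulVec _ ((D)ᵀ * Γ') M, hMuv,
      ← Matrix.mulVec_mulVec _ (Dᵀ) Γ', ← Matrix.mulVec_sub]
    have harg : (D.mulVec x' + e) - Γ'.mulVec (xbΓ - xsΓ) = r := by
      rw [hs, Matrix.mulVec_sub, hr, h2]; abel
    rw [harg]
    funext j
    simp [Matrix.mulVec, dotProduct, Matrix.transpose, colSub, hD, hr']
  -- norm comparison
  have hcard : (Λ \ Γ).card = (Γ \ Λ).card := by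
    rw [Finset.card_sdiff_comm (hΛcard.trans hΓcard.symm)]
  let φ : ↥(Λ \ Γ) ≃ ↥(Γ \ Λ) := Finset.equivOfCardEq hcard
  have hkey : αl * euclNorm r' ≤ euclNorm (xbΓ - xsΓ) := by
    have hsum : αl ^ 2 * ∑ j : ↥(Λ \ Γ), (r' j) ^ 2 ≤ ∑ i : ↥Γ, ((xbΓ - xsΓ) i) ^ 2 := by
      have step1 : ∀ j : ↥(Λ \ Γ), αl ^ 2 * (r' j) ^ 2 ≤ (xb (φ j).1) ^ 2 := by
        intro j
        have hjΓ : j.1 ∉ Γ := (Finset.mem_sdiff.mp j.2).2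
        have hiΓ : (φ j).1 ∈ Γ := (Finset.mem_sdiff.mp (φ j).2).1
        have h := hmin (φ j).1 hiΓ j.1 hjΓ
        have h2 := pow_le_pow_left₀ (by positivity) h 2
        calc αl ^ 2 * (r' j) ^ 2 = (αl * |(Aᵀ.mulVec r) j.1|) ^ 2 := by
              rw [mul_pow, sq_abs, hr']
          _ ≤ |xb (φ j).1| ^ 2 := h2
          _ = (xb (φ j).1) ^ 2 := sq_abs _
      calc αl ^ 2 * ∑ j : ↥(Λ \ Γ), (r' j) ^ 2
          = ∑ j : ↥(Λ \ Γ), αl ^ 2 * (r' j) ^ 2 := Finset.mul_sum _ _ _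
        _ ≤ ∑ j : ↥(Λ \ Γ), (xb (φ j).1) ^ 2 := Finset.sum_le_sum (fun j _ => step1 j)
        _ = ∑ i : ↥(Γ \ Λ), (xb i.1) ^ 2 := Equiv.sum_comp φ (fun i => (xb i.1) ^ 2)
        _ = ∑ i ∈ Γ \ Λ, (xb i) ^ 2 :=
            Finset.sum_coe_sort (Γ \ Λ) (fun i => (xb i) ^ 2)
        _ = ∑ i ∈ Γ \ Λ, (xb i - xstar i) ^ 2 := by
            refine Finset.sum_congr rfl (fun i hi => ?_)
            have : xstar i = 0 := by
              by_contra hc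
              exact (Finset.mem_sdiff.mp hi).2 ((hΛ i).mp hc)
            rw [this, sub_zero]
        _ ≤ ∑ i ∈ Γ, (xb i - xstar i) ^ 2 :=
            Finset.sum_le_sum_of_subset_of_nonneg Finset.sdiff_subset
              (fun i _ _ => sq_nonneg _)
        _ = ∑ i : ↥Γ, ((xbΓ - xsΓ) i) ^ 2 := by
            rw [← Finset.sum_coe_sort Γ (fun i => (xb i - xstar i) ^ 2)]
            rfl
    have : αl * euclNorm r' = Real.sqrt (αl ^ 2 * ∑ j : ↥(Λ \ Γ), (r' j) ^ 2) := by
      rw [Real.sqrt_mul (by positivity), Real.sqrt_sq hαl.le, euclNorm]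
    rw [this, euclNorm]
    exact Real.sqrt_le_sqrt hsum
  -- final chain
  have chain1 : euclNorm (xbΓ - xsΓ) ≤ euclNorm u + euclNorm v := by
    rw [← hA]; exact euclNorm_add_le u v
  have chain2 : euclNorm w - euclNorm z ≤ euclNorm r' := by
    rw [← hB]; exact euclNorm_sub_le_add w z
  have : αl * (euclNorm w - euclNorm z) ≤ αl * euclNorm r' :=
    mul_le_mul_of_nonneg_left chain2 hαl.le
  linarith
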